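/- Let V be a finite-dimensional real vector space, Z : V → ℂ an ℝ-linear map, and Q a quadratic form on V such that Q(v) < 0 for every nonzero v ∈ ker Z. Then there exists a constant C > 0 such that the quadratic form v ↦ C²·|Z(v)|² − Q(v) is positive definite on V. -/

import Mathlib

private lemma quadratic_continuous (V : Type*) [NormedAddCommGroup V] [NormedSpace ℝ V]
    [FiniteDimensional ℝ V] (Q : QuadraticForm ℝ V) : Continuous fun v => Q v := by
  have hB : Continuous fun v => Q.polarBilin v v := by
    have h1 : Continuous fun v => (Q.polarBilin v).toContinuousLinearMap :=
      LinearMap.continuous_of_finiteDimensional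
        ((LinearMap.toContinuousLinearMap : (V →ₗ[ℝ] ℝ) ≃ₗ[ℝ] (V →L[ℝ] ℝ)).toLinearMap.comp
          Q.polarBilin)
    exact isBoundedBilinearMap_apply.continuous.comp (h1.prodMk continuous_id)
  have hQ : ∀ v : V, Q v = Q.polarBilin v v / 2 := by
    intro v
    rw [QuadraticMap.polarBilin_apply_apply, QuadraticMap.polar_self]
    ring
  simpa only [← hQ] using hB.div_const 2

private lemma stmt_5_aux (V : Type*) [NormedAddCommGroup V] [NormedSpace ℝ V]
    [FiniteDimensional ℝ V]
    (Z : V →ₗ[ℝ] ℂ) (Q : QuadraticForm ℝ V)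
    (hker : ∀ v : V, Z v = 0 → v ≠ 0 → Q v < 0) :
    ∃ C : ℝ, 0 < C ∧ ∀ v : V, v ≠ 0 → 0 < C ^ 2 * ‖Z v‖ ^ 2 - Q v := by
  -- functions
  set h : V → ℝ := fun v => ‖Z v‖ ^ 2 with hh
  have hhcont : Continuous h := by
    have : Continuous fun v : V => Z v := Z.continuous_of_finiteDimensional
    exact ((continuous_norm.comp this).pow 2)
  have hqcont : Continuous fun v => Q v := quadratic_continuous V Q
  -- claim: exists C > 0 good on the unit sphere
  have key : ∃ C : ℝ, 0 < C ∧ ∀ v : V, ‖v‖ = 1 → 0 < C ^ 2 * h v - Q v := by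
    set K : Set V := Metric.sphere 0 1 ∩ {v | 0 ≤ Q v} with hK
    have hKc : IsCompact K := by
      apply (isCompact_sphere (0 : V) 1).inter_right
      exact isClosed_le continuous_const hqcont
    rcases K.eq_empty_or_nonempty with hKe | hKne
    · refine ⟨1, one_pos, fun v hv => ?_⟩
      have hQv : Q v < 0 := by
        by_contra hc
        exact (Set.eq_empty_iff_forall_notMem.mp hKe v)
          ⟨by simpa [Metric.mem_sphere, dist_eq_norm] using hv, le_of_not_gt hc⟩
      have : 0 ≤ h v := by positivity
      nlinarith
    · -- min of h on K is positive, max of Q on K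
      obtain ⟨a, haK, ha⟩ := hKc.exists_isMinOn hKne hhcont.continuousOn
      obtain ⟨b, hbK, hb⟩ := hKc.exists_isMaxOn hKne hqcont.continuousOn
      have hm : 0 < h a := by
        have hna : ‖a‖ = 1 := by
          simpa [Metric.mem_sphere, dist_eq_norm] using haK.1
        have hane : a ≠ 0 := by
          intro h0; rw [h0] at hna; simp at hna
        have hZa : Z a ≠ 0 := by
          intro h0
          exact absurd (hker a h0 hane) (not_lt.mpr haK.2)
        have h0 : (0:ℝ) < ‖Z a‖ :=
          (norm_nonneg (Z a)).lt_of_ne (fun hc => hZa (by simpa using hc.symm))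
        simpa [hh] using pow_pos h0 2
      have hM0 : 0 ≤ Q b := hbK.2
      set C : ℝ := Real.sqrt ((Q b + 1) / h a) with hC
      have hCpos : 0 < C := Real.sqrt_pos.mpr (by positivity)
      have hC2 : C ^ 2 = (Q b + 1) / h a := Real.sq_sqrt (by positivity)
      refine ⟨C, hCpos, fun v hv => ?_⟩
      by_cases hQv : 0 ≤ Q v
      · have hvK : v ∈ K := ⟨by simpa [Metric.mem_sphere, dist_eq_norm] using hv, hQv⟩
        have h1 : h a ≤ h v := ha hvK
        have h2 : Q v ≤ Q b := hb hvK
        have : C ^ 2 * h a = Q b + 1 := by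
          rw [hC2]; field_simp
        nlinarith
      · have : 0 ≤ h v := by positivity
        nlinarith [not_le.mp hQv]
  obtain ⟨C, hCpos, hCsph⟩ := key
  refine ⟨C, hCpos, fun v hv => ?_⟩
  -- scale to the sphere
  set t : ℝ := ‖v‖ with ht
  have htpos : 0 < t := norm_pos_iff.mpr hv
  set u : V := t⁻¹ • v with hu
  have hun : ‖u‖ = 1 := by
    rw [hu, norm_smul]
    simp [abs_of_pos (inv_pos.mpr htpos), ht, inv_mul_cancel₀ (ne_of_gt htpos), inv_mul_cancel₀ (ne_of_gt (norm_pos_iff.mpr hv))]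
  have hvu : v = t • u := by
    rw [hu, smul_smul, mul_inv_cancel₀ (ne_of_gt htpos), one_smul]
  have hQ : Q v = t ^ 2 * Q u := by
    rw [hvu, QuadraticMap.map_smul, smul_eq_mul]; ring
  have hZ : ‖Z v‖ ^ 2 = t ^ 2 * ‖Z u‖ ^ 2 := by
    rw [hvu, map_smul, norm_smul, mul_pow]
    simp [abs_of_pos htpos]
  have := hCsph u hun
  simp only [hh] at this
  have ht2 : 0 < t ^ 2 := by positivity
  rw [hQ, hZ]
  nlinarith

/-- compactness argument inside Lemma A.4 of the paper.
`V` is a finite-dimensional real vector space, `Z : V → ℂ` is ℝ-linear, and `Q` is a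
quadratic form with `Q < 0` on `ker Z ∖ {0}`.  Then there is `C > 0` such that the
quadratic form `v ↦ C²·|Z(v)|² − Q(v)` is positive definite. -/
theorem stmt_5 (V : Type*) [AddCommGroup V] [Module ℝ V] [FiniteDimensional ℝ V]
    (Z : V →ₗ[ℝ] ℂ) (Q : QuadraticForm ℝ V)
    (hker : ∀ v : V, Z v = 0 → v ≠ 0 → Q v < 0) :
    ∃ C : ℝ, 0 < C ∧ ∀ v : V, v ≠ 0 → 0 < C ^ 2 * ‖Z v‖ ^ 2 - Q v := by
  -- transfer everything to `Fin n → ℝ` via a basis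
  let e : V ≃ₗ[ℝ] (Fin (Module.finrank ℝ V) → ℝ) := (Module.finBasis ℝ V).equivFun
  let Z' : (Fin (Module.finrank ℝ V) → ℝ) →ₗ[ℝ] ℂ := Z.comp e.symm.toLinearMap
  let Q' : QuadraticForm ℝ (Fin (Module.finrank ℝ V) → ℝ) := Q.comp e.symm.toLinearMap
  have hker' : ∀ w, Z' w = 0 → w ≠ 0 → Q' w < 0 := by
    intro w hZw hw
    have : e.symm w ≠ 0 := fun h0 => hw (by simpa using congrArg e h0)
    exact hker (e.symm w) hZw this
  obtain ⟨C, hCpos, hC⟩ := stmt_5_aux _ Z' Q' hker'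
  refine ⟨C, hCpos, fun v hv => ?_⟩
  have hev : e v ≠ 0 := fun h0 => hv (by simpa using congrArg e.symm h0)
  have := hC (e v) hev
  simpa [Z', Q', QuadraticMap.comp_apply] using this
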